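/- Endemic equilibrium with identical patch parameters: assume A is symmetric and irreducible, ν_S = ν_I = ν > 0, and λ_j = λ, γ_j = γ for all j with λ > γ > 0. Then the point z* given by S*_j = γ/(ℓλ) and I*_j = (1/ℓ)(1 − γ/λ) for all j is an equilibrium of the system (★), and it is the unique equilibrium of (★) in Δ whose infectious components are not all zero. -/

import Mathlib

open Finset Filter Topology

/-- Susceptible component of the drift of the SIS patch model
(with the convention `x/0 = 0`, matching `S_j I_j/(S_j+I_j) = 0` when `S_j + I_j = 0`). -/
noncomputable def driftS (ℓ : ℕ) (lam gam : Fin ℓ → ℝ) (νS : ℝ)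
    (A : Matrix (Fin ℓ) (Fin ℓ) ℝ) (S I : Fin ℓ → ℝ) (j : Fin ℓ) : ℝ :=
  - lam j * (S j * I j / (S j + I j)) + gam j * I j
    + νS * ∑ k ∈ univ.erase j, (A k j * S k - A j k * S j)

/-- Infectious component of the drift of the SIS patch model. -/
noncomputable def driftI (ℓ : ℕ) (lam gam : Fin ℓ → ℝ) (νI : ℝ)
    (A : Matrix (Fin ℓ) (Fin ℓ) ℝ) (S I : Fin ℓ → ℝ) (j : Fin ℓ) : ℝ :=
  lam j * (S j * I j / (S j + I j)) - gam j * I j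
    + νI * ∑ k ∈ univ.erase j, (A k j * I k - A j k * I j)

/-- The connectivity matrix `A` is irreducible. -/
def IrreducibleMat (ℓ : ℕ) (A : Matrix (Fin ℓ) (Fin ℓ) ℝ) : Prop :=
  ∀ j k : Fin ℓ, j ≠ k → ∃ s : ℕ, 2 ≤ s ∧ ∃ c : ℕ → Fin ℓ,
    c 0 = j ∧ c (s - 1) = k ∧ ∀ i, i < s - 1 → A (c i) (c (i + 1)) ≠ 0

/-- Propagation along paths for an irreducible matrix: a nonempty set of indices which
is closed under passing to "neighbours" must be everything. -/
lemma irr_propagate {ℓ : ℕ} (A : Matrix (Fin ℓ) (Fin ℓ) ℝ) (hirr : IrreducibleMat ℓ A)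
    (Z : Fin ℓ → Prop) (hZ : ∀ j k, Z j → A j k ≠ 0 → Z k)
    (j : Fin ℓ) (hj : Z j) : ∀ k, Z k := by
  intro k
  by_cases hjk : j = k
  · exact hjk ▸ hj
  · obtain ⟨s, hs, c, hc0, hcs, hstep⟩ := hirr j k hjk
    have key : ∀ i, i ≤ s - 1 → Z (c i) := by
      intro i
      induction i with
      | zero => intro _; rw [hc0]; exact hj
      | succ n ih =>
        intro hn
        exact hZ _ _ (ih (Nat.le_of_succ_le hn)) (hstep n (Nat.lt_of_succ_le hn))
    exact hcs ▸ key (s - 1) le_rfl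

/-- Endemic equilibrium with identical patch parameters: if `A` is symmetric and
irreducible, `ν_S = ν_I = ν > 0` and all patches share the parameters `λ > γ > 0`, then
`S*_j = γ/(ℓλ)`, `I*_j = (1/ℓ)(1 − γ/λ)` is an equilibrium of (★), and it is the unique
equilibrium of (★) in `Δ` whose infectious components are not all zero. -/
theorem endemic_equilibrium_identical_patches
    (ℓ : ℕ) (hℓ : 1 ≤ ℓ)
    (lam gam : ℝ) (hgam : 0 < gam) (hlam : gam < lam)
    (ν : ℝ) (hν : 0 < ν)
    (A : Matrix (Fin ℓ) (Fin ℓ) ℝ) (hA : ∀ j k, 0 ≤ A j k) (hAdiag : ∀ j, A j j = 0)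
    (hsym : A.IsSymm) (hirr : IrreducibleMat ℓ A) :
    ((∀ j, driftS ℓ (fun _ => lam) (fun _ => gam) ν A
        (fun _ => gam / ((ℓ : ℝ) * lam)) (fun _ => (ℓ : ℝ)⁻¹ * (1 - gam / lam)) j = 0) ∧
     (∀ j, driftI ℓ (fun _ => lam) (fun _ => gam) ν A
        (fun _ => gam / ((ℓ : ℝ) * lam)) (fun _ => (ℓ : ℝ)⁻¹ * (1 - gam / lam)) j = 0)) ∧
    (∀ S I : Fin ℓ → ℝ,
      (∀ j, 0 ≤ S j) → (∀ j, 0 ≤ I j) → (∑ j, (S j + I j)) = 1 →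
      (∀ j, driftS ℓ (fun _ => lam) (fun _ => gam) ν A S I j = 0) →
      (∀ j, driftI ℓ (fun _ => lam) (fun _ => gam) ν A S I j = 0) →
      I ≠ 0 →
      S = (fun _ => gam / ((ℓ : ℝ) * lam)) ∧
      I = (fun _ => (ℓ : ℝ)⁻¹ * (1 - gam / lam))) := by
  have hℓpos : (0 : ℝ) < (ℓ : ℝ) := by exact_mod_cast hℓ
  have hℓ0 : (ℓ : ℝ) ≠ 0 := ne_of_gt hℓpos
  have hlam0 : lam ≠ 0 := ne_of_gt (hgam.trans hlam)
  have hlampos : 0 < lam := hgam.trans hlam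
  have hsymm : ∀ j k, A j k = A k j := fun j k => hsym.apply k j
  -- value of S* + I*
  have hsi : gam / ((ℓ : ℝ) * lam) + (ℓ : ℝ)⁻¹ * (1 - gam / lam) = (ℓ : ℝ)⁻¹ := by
    field_simp
    ring
  -- zero diffusion for constant vectors
  have hdiffzero : ∀ (c : ℝ) (j : Fin ℓ),
      ∑ k ∈ univ.erase j, (A k j * c - A j k * c) = 0 := by
    intro c j
    apply Finset.sum_eq_zero
    intro k _
    rw [hsymm j k]
    ring
  constructor
  · constructor
    · intro j
      unfold driftS
      rw [hdiffzero, hsi]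
      field_simp
      ring
    · intro j
      unfold driftI
      rw [hdiffzero, hsi]
      field_simp
      ring
  · intro S I hS hI hsum hdS hdI hI0
    -- Step A : total mass per patch is constant, equal to 1/ℓ
    have hN : ∀ j, ∑ k ∈ univ.erase j,
        (A j k * ((S k + I k) - (S j + I j))) = 0 := by
      intro j
      have h1 := hdS j
      have h2 := hdI j
      unfold driftS at h1
      unfold driftI at h2
      have h3 : ν * (∑ k ∈ univ.erase j, (A k j * S k - A j k * S j)
          + ∑ k ∈ univ.erase j, (A k j * I k - A j k * I j)) = 0 := by linarith
      have h4 : (∑ k ∈ univ.erase j, (A k j * S k - A j k * S j)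
          + ∑ k ∈ univ.erase j, (A k j * I k - A j k * I j)) = 0 := by
        rcases mul_eq_zero.mp h3 with h | h
        · exact absurd h (ne_of_gt hν)
        · exact h
      rw [← Finset.sum_add_distrib] at h4
      rw [← h4]
      apply Finset.sum_congr rfl
      intro k _
      rw [hsymm j k]
      ring
    -- maximizer of N
    have hne : (univ : Finset (Fin ℓ)).Nonempty := ⟨⟨0, hℓ⟩, mem_univ _⟩
    obtain ⟨j0, _, hj0⟩ := Finset.exists_max_image univ (fun j => S j + I j) hne
    set M : ℝ := S j0 + I j0 with hM
    have hclosedN : ∀ j k, (S j + I j = M) → A j k ≠ 0 → (S k + I k = M) := by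
      intro j k hj hAjk
      have hterms : ∀ k ∈ univ.erase j, A j k * ((S k + I k) - (S j + I j)) ≤ 0 := by
        intro k _
        apply mul_nonpos_of_nonneg_of_nonpos (hA j k)
        have := hj0 k (mem_univ k)
        rw [hj]
        linarith
      have hz := (Finset.sum_eq_zero_iff_of_nonpos hterms).mp (hN j)
      have hkj : k ≠ j := by
        intro h; rw [h, hAdiag] at hAjk; exact hAjk rfl
      have := hz k (Finset.mem_erase.mpr ⟨hkj, mem_univ k⟩)
      rcases mul_eq_zero.mp this with h | h
      · exact absurd h hAjk
      · rw [hj] at h; linarith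
    have hNconst : ∀ k, S k + I k = M :=
      irr_propagate A hirr (fun j => S j + I j = M) hclosedN j0 rfl
    have hMval : M = (ℓ : ℝ)⁻¹ := by
      have : ∑ j : Fin ℓ, (S j + I j) = (ℓ : ℝ) * M := by
        rw [Finset.sum_congr rfl (fun j _ => hNconst j)]
        simp [Finset.card_univ, mul_comm]
      rw [hsum] at this
      field_simp at this ⊢
      linarith
    have hNval : ∀ k, S k + I k = (ℓ : ℝ)⁻¹ := fun k => (hNconst k).trans hMval
    -- Step B : all infectious components are positive
    have hclosedZ : ∀ j k, (I j = 0) → A j k ≠ 0 → (I k = 0) := by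
      intro j k hj hAjk
      have h2 := hdI j
      unfold driftI at h2
      rw [hj] at h2
      simp only [mul_zero, zero_div, sub_zero, zero_mul, mul_zero, add_zero, zero_add,
        sub_self] at h2
      have h4 : ∑ k ∈ univ.erase j, A k j * I k = 0 := by
        rcases mul_eq_zero.mp h2 with h | h
        · exact absurd h (ne_of_gt hν)
        · exact h
      have hterms : ∀ k ∈ univ.erase j, 0 ≤ A k j * I k := fun k _ =>
        mul_nonneg (hA k j) (hI k)
      have hz := (Finset.sum_eq_zero_iff_of_nonneg hterms).mp h4
      have hkj : k ≠ j := by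
        intro h; rw [h, hAdiag] at hAjk; exact hAjk rfl
      have := hz k (Finset.mem_erase.mpr ⟨hkj, mem_univ k⟩)
      rcases mul_eq_zero.mp this with h | h
      · rw [← hsymm j k] at h; exact absurd h hAjk
      · exact h
    have hIpos : ∀ j, 0 < I j := by
      by_contra h
      push_neg at h
      obtain ⟨j, hj⟩ := h
      have hj0' : I j = 0 := le_antisymm hj (hI j)
      have : ∀ k, I k = 0 := irr_propagate A hirr (fun j => I j = 0) hclosedZ j hj0'
      exact hI0 (funext this)
    -- useful: the reaction term at each j
    have hreac : ∀ j, lam * (S j * I j * (ℓ : ℝ)) - gam * I j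
        + ν * ∑ k ∈ univ.erase j, (A k j * I k - A j k * I j) = 0 := by
      intro j
      have h2 := hdI j
      unfold driftI at h2
      rw [hNval j] at h2
      rw [div_eq_mul_inv, inv_inv] at h2
      linarith
    set istar : ℝ := (lam - gam) / (lam * (ℓ : ℝ)) with histar
    have histarpos : 0 < istar := by
      apply div_pos (by linarith) (by positivity)
    -- Step C : max I ≤ istar
    obtain ⟨jM, _, hjM⟩ := Finset.exists_max_image univ I hne
    obtain ⟨jm, _, hjm⟩ := Finset.exists_min_image univ I hne
    have hmaxle : I jM ≤ istar := by
      have hdiff : ∑ k ∈ univ.erase jM, (A k jM * I k - A jM k * I jM) ≤ 0 := by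
        apply Finset.sum_nonpos
        intro k _
        rw [← hsymm jM k]
        have := hjM k (mem_univ k)
        nlinarith [hA jM k]
      have h := hreac jM
      have hS' : S jM = (ℓ : ℝ)⁻¹ - I jM := by
        have := hNval jM; linarith
      rw [hS'] at h
      have hkey : lam * (((ℓ:ℝ)⁻¹ - I jM) * I jM * (ℓ:ℝ)) - gam * I jM ≥ 0 := by
        have hnp := mul_nonpos_of_nonneg_of_nonpos hν.le hdiff
        linarith
      have hinv : ((ℓ:ℝ)⁻¹ * (ℓ:ℝ)) = 1 := inv_mul_cancel₀ hℓ0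
      have hIjM := hIpos jM
      have hexp : lam * (((ℓ:ℝ)⁻¹ - I jM) * I jM * (ℓ:ℝ)) - gam * I jM
          = I jM * (lam - gam - lam * (ℓ:ℝ) * I jM)
            + (lam * I jM) * ((ℓ:ℝ)⁻¹ * (ℓ:ℝ) - 1) := by ring
      rw [hexp, hinv] at hkey
      have hkey2 : 0 ≤ I jM * (lam - gam - lam * (ℓ:ℝ) * I jM) := by linarith
      have h5 : 0 ≤ lam - gam - lam * (ℓ:ℝ) * I jM := by
        by_contra hcon
        push_neg at hcon
        exact absurd hkey2 (not_le.mpr (mul_neg_of_pos_of_neg hIjM hcon))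
      rw [histar, le_div_iff₀ (by positivity)]
      linarith [mul_comm (I jM) (lam * (ℓ:ℝ))]
    have hminge : istar ≤ I jm := by
      have hdiff : 0 ≤ ∑ k ∈ univ.erase jm, (A k jm * I k - A jm k * I jm) := by
        apply Finset.sum_nonneg
        intro k _
        rw [← hsymm jm k]
        have := hjm k (mem_univ k)
        nlinarith [hA jm k]
      have h := hreac jm
      have hS' : S jm = (ℓ : ℝ)⁻¹ - I jm := by
        have := hNval jm; linarith
      rw [hS'] at h
      have hkey : lam * (((ℓ:ℝ)⁻¹ - I jm) * I jm * (ℓ:ℝ)) - gam * I jm ≤ 0 := by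
        have hnn := mul_nonneg hν.le hdiff
        linarith
      have hinv : ((ℓ:ℝ)⁻¹ * (ℓ:ℝ)) = 1 := inv_mul_cancel₀ hℓ0
      have hIjm := hIpos jm
      have hexp : lam * (((ℓ:ℝ)⁻¹ - I jm) * I jm * (ℓ:ℝ)) - gam * I jm
          = I jm * (lam - gam - lam * (ℓ:ℝ) * I jm)
            + (lam * I jm) * ((ℓ:ℝ)⁻¹ * (ℓ:ℝ) - 1) := by ring
      rw [hexp, hinv] at hkey
      have hkey2 : I jm * (lam - gam - lam * (ℓ:ℝ) * I jm) ≤ 0 := by linarith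
      have h5 : lam - gam - lam * (ℓ:ℝ) * I jm ≤ 0 := by
        by_contra hcon
        push_neg at hcon
        exact absurd hkey2 (not_le.mpr (mul_pos hIjm hcon))
      rw [histar, div_le_iff₀ (by positivity)]
      linarith [mul_comm (I jm) (lam * (ℓ:ℝ))]
    have hIval : ∀ j, I j = istar := by
      intro j
      have h1 := hjM j (mem_univ j)
      have h2 := hjm j (mem_univ j)
      linarith
    have histar' : istar = (ℓ : ℝ)⁻¹ * (1 - gam / lam) := by
      rw [histar, inv_eq_one_div, one_sub_div hlam0, div_mul_div_comm, one_mul,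
        mul_comm (ℓ:ℝ) lam]
    constructor
    · funext j
      have h1 := hNval j
      have h2 := hIval j
      have h3 : S j = (ℓ : ℝ)⁻¹ - istar := by linarith
      rw [histar'] at h3
      show S j = gam / ((ℓ : ℝ) * lam)
      linarith [hsi]
    · funext j
      rw [hIval j, histar']
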